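/- Let S be a finite multiset of nonzero points in R^d, and suppose a subspace W of dimension k contains strictly more than a k/d fraction of the points of S. Then for every invertible linear map A : R^d → R^d, the matrix M_A = (1/|S|) Σ_{x∈S} f_A(x) f_A(x)^T (where f_A(x) = Ax/||Ax||_2) has smallest eigenvalue strictly less than 1/d. -/

import Mathlib

open Matrix
open scoped Classical

private lemma aux_quad {d : ℕ} (T : Multiset (Fin d → ℝ)) (A : Matrix (Fin d) (Fin d) ℝ)
    (v : Fin d → ℝ) :
    v ⬝ᵥ (((T.map (fun x =>
        (A.mulVec x ⬝ᵥ A.mulVec x)⁻¹ •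
          Matrix.vecMulVec (A.mulVec x) (A.mulVec x))).sum).mulVec v)
    = (T.map (fun x => (A.mulVec x ⬝ᵥ A.mulVec x)⁻¹ * (A.mulVec x ⬝ᵥ v)^2)).sum := by
  induction T using Multiset.induction with
  | empty => simp
  | cons a s ih =>
    simp only [Multiset.map_cons, Multiset.sum_cons, Matrix.add_mulVec, dotProduct_add, ih]
    congr 1
    rw [Matrix.smul_mulVec, dotProduct_smul]
    have : (Matrix.vecMulVec (A.mulVec a) (A.mulVec a)).mulVec v
        = (A.mulVec a ⬝ᵥ v) • A.mulVec a := by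
      ext i
      simp [Matrix.vecMulVec, Matrix.mulVec, dotProduct, Finset.mul_sum, mul_comm, mul_assoc,
        mul_left_comm]
    rw [this, dotProduct_smul]
    simp [smul_eq_mul, sq, dotProduct_comm]

private lemma aux_swap {α : Type*} {n : ℕ} (S : Multiset α) (f : α → Fin n → ℝ) :
    ∑ i : Fin n, (S.map (fun x => f x i)).sum = (S.map (fun x => ∑ i : Fin n, f x i)).sum := by
  induction S using Multiset.induction with
  | empty => simp
  | cons a s ih => simp [Multiset.map_cons, Multiset.sum_cons, Finset.sum_add_distrib, ih]

private lemma aux_ind {α : Type*} (S : Multiset α) (p : α → Prop) [DecidablePred p] :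
    (S.map (fun x => if p x then (0:ℝ) else 1)).sum = ((S.filter (fun x => ¬ p x)).card : ℝ) := by
  induction S using Multiset.induction with
  | empty => simp
  | cons a s ih =>
    by_cases h : p a <;> simp [Multiset.filter_cons, h, ih, add_comm]

/-- If a subspace `W` of dimension `k < d` contains strictly more than a
`k/d` fraction of the points of a finite multiset `S` of nonzero points, then for every
invertible `A`, the matrix `M_A = (1/|S|) Σ_{x∈S} f_A(x) f_A(x)ᵀ` has smallest
eigenvalue strictly less than `1/d` (there is a unit vector with quadratic form `< 1/d`). -/
theorem stmt_6 {d : ℕ} (hd : 0 < d) (S : Multiset (Fin d → ℝ)) (hS0 : S ≠ 0)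
    (hSnz : ∀ x ∈ S, x ≠ 0)
    (W : Submodule ℝ (Fin d → ℝ)) (k : ℕ) (hk : Module.finrank ℝ W = k) (hkd : k < d)
    (hcount : ((k : ℝ) / d) * S.card < ((S.filter (fun x => x ∈ W)).card : ℝ)) :
    ∀ A : Matrix (Fin d) (Fin d) ℝ, IsUnit A.det →
      ∃ v : Fin d → ℝ, v ⬝ᵥ v = 1 ∧
        v ⬝ᵥ (((S.card : ℝ)⁻¹ • (S.map (fun x =>
            (A.mulVec x ⬝ᵥ A.mulVec x)⁻¹ •
              Matrix.vecMulVec (A.mulVec x) (A.mulVec x))).sum).mulVec v) < 1 / d := by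
  intro A hA
  classical
  have hInv : Invertible A := A.invertibleOfIsUnitDet hA
  let ψ : (Fin d → ℝ) ≃ₗ[ℝ] EuclideanSpace ℝ (Fin d) := (WithLp.linearEquiv 2 ℝ (Fin d → ℝ)).symm
  let e : (Fin d → ℝ) ≃ₗ[ℝ] (Fin d → ℝ) := A.toLinearEquiv' hInv
  let U : Submodule ℝ (EuclideanSpace ℝ (Fin d)) := W.map ((e.trans ψ) : (Fin d → ℝ) →ₗ[ℝ] _)
  have hU : Module.finrank ℝ U = k := by
    rw [LinearEquiv.finrank_map_eq]; exact hk
  have hUperp : Module.finrank ℝ (Uᗮ : Submodule ℝ (EuclideanSpace ℝ (Fin d))) = d - k := by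
    have := Submodule.finrank_add_finrank_orthogonal (K := U)
    rw [hU, finrank_euclideanSpace_fin] at this
    omega
  set n := Module.finrank ℝ (Uᗮ : Submodule ℝ (EuclideanSpace ℝ (Fin d))) with hn
  let b := stdOrthonormalBasis ℝ (Uᗮ : Submodule ℝ (EuclideanSpace ℝ (Fin d)))
  let v : Fin n → EuclideanSpace ℝ (Fin d) := fun i => (b i : EuclideanSpace ℝ (Fin d))
  have hv : Orthonormal ℝ v := b.orthonormal.comp_linearIsometry (Submodule.subtypeₗᵢ _)
  have hinner : ∀ (a c : Fin d → ℝ), (inner ℝ (ψ a) (ψ c) : ℝ) = a ⬝ᵥ c := by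
    intro a c
    simp [PiLp.inner_apply, RCLike.inner_apply, dotProduct, ψ, mul_comm]
  have hmem : ∀ x ∈ W, ψ (A.mulVec x) ∈ U := by
    intro x hx
    exact ⟨x, hx, by simp [e, Matrix.toLinearEquiv', Matrix.toLin'_apply]⟩
  let u : Fin n → (Fin d → ℝ) := fun i => ψ.symm (v i)
  have hψu : ∀ i, ψ (u i) = v i := fun i => ψ.apply_symm_apply (v i)
  -- units
  have hunit : ∀ i, (u i) ⬝ᵥ (u i) = 1 := by
    intro i
    have h1 : (inner ℝ (v i) (v i) : ℝ) = 1 := by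
      rw [real_inner_self_eq_norm_sq, hv.1 i]; norm_num
    rw [← hinner, hψu, h1]
  -- Bessel per point
  have hbessel : ∀ a : Fin d → ℝ, ∑ i : Fin n, (a ⬝ᵥ u i)^2 ≤ a ⬝ᵥ a := by
    intro a
    have := hv.sum_inner_products_le (𝕜 := ℝ) (ψ a) (s := Finset.univ)
    calc ∑ i : Fin n, (a ⬝ᵥ u i)^2
        = ∑ i : Fin n, ‖(inner ℝ (v i) (ψ a) : ℝ)‖^2 := by
          apply Finset.sum_congr rfl
          intro i _
          rw [real_inner_comm, ← hψu i, hinner]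
          rw [Real.norm_eq_abs, sq_abs]
      _ ≤ ‖ψ a‖^2 := this
      _ = a ⬝ᵥ a := by rw [← real_inner_self_eq_norm_sq, hinner]
  -- orthogonality
  have horth : ∀ x ∈ W, ∀ i, A.mulVec x ⬝ᵥ u i = 0 := by
    intro x hx i
    have hvi : v i ∈ Uᗮ := (b i).2
    have := (Submodule.mem_orthogonal _ _).1 hvi _ (hmem x hx)
    rw [← hinner, hψu, this]
  -- positivity
  have hpos : ∀ x ∈ S, 0 < A.mulVec x ⬝ᵥ A.mulVec x := by
    intro x hx
    have hx0 : A.mulVec x ≠ 0 := by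
      intro h
      apply hSnz x hx
      have : A.mulVec x = A.mulVec 0 := by rw [h, Matrix.mulVec_zero]
      exact Matrix.mulVec_injective_of_invertible A this
    have := Matrix.dotProduct_self_star_pos_iff (v := A.mulVec x) |>.2 hx0
    simpa using this
  -- suppose all quadratic forms ≥ 1/d
  by_contra hcon
  push_neg at hcon
  set c : ℝ := (S.card : ℝ)⁻¹ with hc
  have hcard : (0:ℝ) < S.card := by
    have : S.card ≠ 0 := fun h => hS0 (Multiset.card_eq_zero.1 h)
    positivity
  have hcpos : 0 < c := by positivity
  -- each Q (u i) ≥ 1/d, so sum ≥ n/d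
  have hQ : ∀ i : Fin n, (1:ℝ)/d ≤
      c * (S.map (fun x => (A.mulVec x ⬝ᵥ A.mulVec x)⁻¹ * (A.mulVec x ⬝ᵥ u i)^2)).sum := by
    intro i
    have := hcon (u i) (hunit i)
    rwa [Matrix.smul_mulVec, dotProduct_smul, smul_eq_mul, aux_quad] at this
  have hsumlow : (n:ℝ)/d ≤ ∑ i : Fin n,
      c * (S.map (fun x => (A.mulVec x ⬝ᵥ A.mulVec x)⁻¹ * (A.mulVec x ⬝ᵥ u i)^2)).sum := by
    calc (n:ℝ)/d = ∑ _i : Fin n, (1:ℝ)/d := by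
          rw [Finset.sum_const, Finset.card_univ, Fintype.card_fin, nsmul_eq_mul]
          ring
      _ ≤ _ := Finset.sum_le_sum (fun i _ => hQ i)
  -- upper bound for the sum
  have hswap : ∑ i : Fin n,
      c * (S.map (fun x => (A.mulVec x ⬝ᵥ A.mulVec x)⁻¹ * (A.mulVec x ⬝ᵥ u i)^2)).sum
      = c * (S.map (fun x => ∑ i : Fin n,
          (A.mulVec x ⬝ᵥ A.mulVec x)⁻¹ * (A.mulVec x ⬝ᵥ u i)^2)).sum := by
    rw [← Finset.mul_sum, aux_swap]
  have hptwise : ∀ x ∈ S, (∑ i : Fin n,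
      (A.mulVec x ⬝ᵥ A.mulVec x)⁻¹ * (A.mulVec x ⬝ᵥ u i)^2)
      ≤ (fun x => if x ∈ W then (0:ℝ) else 1) x := by
    intro x hx
    by_cases hxW : x ∈ W
    · simp only [hxW, if_true]
      apply le_of_eq
      apply Finset.sum_eq_zero
      intro i _
      rw [horth x hxW i]
      ring
    · simp only [hxW, if_false]
      rw [← Finset.mul_sum]
      have h1 := hbessel (A.mulVec x)
      have h2 := hpos x hx
      calc (A.mulVec x ⬝ᵥ A.mulVec x)⁻¹ * ∑ i : Fin n, (A.mulVec x ⬝ᵥ u i)^2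
          ≤ (A.mulVec x ⬝ᵥ A.mulVec x)⁻¹ * (A.mulVec x ⬝ᵥ A.mulVec x) := by
            apply mul_le_mul_of_nonneg_left h1 (by positivity)
        _ = 1 := inv_mul_cancel₀ (ne_of_gt h2)
  have hsumup : (S.map (fun x => ∑ i : Fin n,
      (A.mulVec x ⬝ᵥ A.mulVec x)⁻¹ * (A.mulVec x ⬝ᵥ u i)^2)).sum
      ≤ ((S.filter (fun x => ¬ x ∈ W)).card : ℝ) := by
    rw [← aux_ind S (fun x => x ∈ W)]
    exact Multiset.sum_map_le_sum_map _ _ hptwise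
  -- counting
  have hfilter : ((S.filter (fun x => ¬ x ∈ W)).card : ℝ)
      = (S.card : ℝ) - ((S.filter (fun x => x ∈ W)).card : ℝ) := by
    have := Multiset.filter_add_not (fun x => x ∈ W) S
    have hcc : (S.filter (fun x => x ∈ W)).card + (S.filter (fun x => ¬ x ∈ W)).card
        = S.card := by
      rw [← Multiset.card_add, this]
    have := congrArg (fun m : ℕ => (m : ℝ)) hcc
    push_cast at this
    linarith
  -- final numeric contradiction
  have hkd' : (k:ℝ) < d := by exact_mod_cast hkd
  have hd' : (0:ℝ) < d := by exact_mod_cast hd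
  have hnr : (n:ℝ) = (d:ℝ) - k := by
    rw [hUperp]
    push_cast [Nat.cast_sub (le_of_lt hkd)]
    ring
  have hlast : c * ((S.card : ℝ) - ((S.filter (fun x => x ∈ W)).card : ℝ)) < (n:ℝ)/d := by
    have h1 : (S.card : ℝ) - ((S.filter (fun x => x ∈ W)).card : ℝ)
        < (S.card : ℝ) * (1 - (k:ℝ)/d) := by nlinarith [hcount]
    have h2 : c * ((S.card : ℝ) * (1 - (k:ℝ)/d)) = 1 - (k:ℝ)/d := by
      field_simp [hc]
      rw [hc, inv_mul_cancel₀ (ne_of_gt hcard), one_mul]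
    calc c * ((S.card : ℝ) - ((S.filter (fun x => x ∈ W)).card : ℝ))
        < c * ((S.card : ℝ) * (1 - (k:ℝ)/d)) := by
          apply mul_lt_mul_of_pos_left h1 hcpos
      _ = 1 - (k:ℝ)/d := h2
      _ = (n:ℝ)/d := by rw [hnr]; field_simp
  have : (n:ℝ)/d < (n:ℝ)/d := by
    calc (n:ℝ)/d ≤ _ := hsumlow
      _ = _ := hswap
      _ ≤ c * ((S.filter (fun x => ¬ x ∈ W)).card : ℝ) := by
          apply mul_le_mul_of_nonneg_left hsumup (le_of_lt hcpos)
      _ = c * ((S.card : ℝ) - ((S.filter (fun x => x ∈ W)).card : ℝ)) := by rw [hfilter]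
      _ < (n:ℝ)/d := hlast
  exact lt_irrefl _ this
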